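/- Let C ≥ 1 and let ψ : 𝕋 → ℂ be Lipschitz with respect to |·|_𝕋 with C^{−1} ≤ |ψ(t)| ≤ C for all t ∈ 𝕋. Let ρ = Σ_{j=1}^S u_j δ_{r_j} and ν = Σ_{j=1}^S v_j δ_{s_j} be atomic measures on 𝕋 with the same number S of atoms and u ≠ 0. Then for every permutation π of {1,…,S}: 𝓔^π_{∞,2}(ρ,ν) ≤ (1 + C|ψ|_Lip + C²) · 𝓔^π_{∞,2}(ψρ, ψν) and 𝓔^π_{∞,2}(ψρ, ψν) ≤ (1 + C|ψ|_Lip + C²) · 𝓔^π_{∞,2}(ρ,ν), where ψρ := Σ_j u_j ψ(r_j) δ_{r_j} and ψν := Σ_j v_j ψ(s_j) δ_{s_j}. -/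

import Mathlib

open scoped Real
open Complex

set_option linter.unusedVariables false

noncomputable section

/-- Wrap-around distance on `ℝ` (distance to the nearest integer). -/
def distT (t : ℝ) : ℝ := ⨅ n : ℤ, |t - (n : ℝ)|

/-- Euclidean norm of a complex vector. -/
def norm2 {n : ℕ} (y : Fin n → ℂ) : ℝ := Real.sqrt (∑ i, ‖y i‖ ^ 2)

/-- Total variation norm of the atomic measure with amplitudes `a`. -/
def tvNorm {R : ℕ} (a : Fin R → ℂ) : ℝ := ∑ j, ‖a j‖

/-- First `M` Fourier coefficients of the atomic measure `∑ j, a j • δ_{t j}`. -/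
def fourierCoeffs (M : ℕ) {R : ℕ} (a : Fin R → ℂ) (t : Fin R → ℝ) : Fin M → ℂ :=
  fun k => ∑ j, a j * Complex.exp (-2 * (Real.pi : ℂ) * Complex.I * ((k : ℕ) : ℂ) * ((t j : ℝ) : ℂ))

/-- The function `w(t) = ∑_{k<λ} β^{-k} e^{-2πikt}`. -/
def wFun (β : ℝ) (lam : ℕ) (t : ℝ) : ℂ :=
  ∑ k ∈ Finset.range lam, ((β : ℂ))⁻¹ ^ k * Complex.exp (-2 * (Real.pi : ℂ) * Complex.I * (k : ℂ) * (t : ℂ))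

/-- Condensation matrix `V = [I_m, β⁻¹ I_m, …, β^{-(λ-1)} I_m]`. -/
def Vmat (β : ℝ) (m lam : ℕ) : Matrix (Fin m) (Fin (lam * m)) ℂ :=
  Matrix.of fun i j => if (j : ℕ) % m = (i : ℕ) then ((β : ℂ))⁻¹ ^ ((j : ℕ) / m) else 0

/-- Noise-shaping matrix `H` with `1` on the diagonal and `-β` on the `m`-th subdiagonal. -/
def Hmat (β : ℝ) (m M : ℕ) : Matrix (Fin M) (Fin M) ℂ :=
  Matrix.of fun j k => if (j : ℕ) = (k : ℕ) then 1 else if (j : ℕ) = (k : ℕ) + m then -(β : ℂ) else 0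

/-- `𝒵_K = {-K+1, -K+3, …, K-1}`. -/
def ZK (K : ℕ) : Set ℤ := {n | ∃ k : ℕ, k < K ∧ n = -(K : ℤ) + 1 + 2 * (k : ℤ)}

/-- The Cartesian alphabet `𝒜 = δ(𝒵_K + i𝒵_K)`. -/
def alphabet (K : ℕ) (δ : ℝ) : Set ℂ :=
  {z | ∃ a b : ℤ, a ∈ ZK K ∧ b ∈ ZK K ∧ z = (δ : ℂ) * ((a : ℂ) + (b : ℂ) * Complex.I)}

/-- `L` is a Lipschitz bound for `φ` with respect to the wrap-around distance. -/
def LipBnd (φ : ℝ → ℂ) (L : ℝ) : Prop := ∀ s t : ℝ, ‖φ s - φ t‖ ≤ L * distT (s - t)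

/-- Lipschitz seminorm `|φ|_Lip` with respect to the wrap-around distance. -/
def lipSemi (φ : ℝ → ℂ) : ℝ := sInf {L : ℝ | 0 ≤ L ∧ LipBnd φ L}

/-- Sup norm of `φ`. -/
def supNorm (φ : ℝ → ℂ) : ℝ := sSup {x : ℝ | ∃ t : ℝ, x = ‖φ t‖}

/-- Lipschitz norm `‖φ‖_Lip = max(‖φ‖_∞, |φ|_Lip)`. -/
def lipNorm (φ : ℝ → ℂ) : ℝ := max (supNorm φ) (lipSemi φ)

/-- Dual Lipschitz norm `‖ρ‖_{Lip*}` of the atomic measure `ρ = ∑ j, u j • δ_{r j}`. -/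
def lipStar {R : ℕ} (u : Fin R → ℂ) (r : Fin R → ℝ) : ℝ :=
  sSup {x : ℝ | ∃ φ : ℝ → ℂ, lipNorm φ ≤ 1 ∧ x = ‖∑ j, u j * φ (r j)‖}

/-- `𝓔_Lip(ρ,ν)` for atomic measures. -/
def ELip {R S : ℕ} (u : Fin R → ℂ) (r : Fin R → ℝ) (v : Fin S → ℂ) (s : Fin S → ℝ) : ℝ :=
  sSup {x : ℝ | ∃ φ : ℝ → ℂ, lipNorm φ ≤ 1 ∧
    x = ‖(∑ j, u j * φ (r j)) - (∑ k, v k * φ (s k))‖}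

open scoped Classical in
/-- The neighborhood index set `𝓘_j^M`. -/
def nearIdx {R S : ℕ} (r : Fin R → ℝ) (s : Fin S → ℝ) (M : ℕ) (j : Fin R) : Finset (Fin S) :=
  Finset.univ.filter fun k => distT (r j - s k) ≤ 0.3298 / ((M : ℝ) - 1)

open scoped Classical in
/-- The residual index set `𝓘_0^M`. -/
def farIdx {R S : ℕ} (r : Fin R → ℝ) (s : Fin S → ℝ) (M : ℕ) : Finset (Fin S) :=
  Finset.univ.filter fun k => ∀ j : Fin R, k ∉ nearIdx r s M j

/-- Amplitude error `𝓔_1^M(ρ,ν)`. -/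
def E1 {R S : ℕ} (u : Fin R → ℂ) (r : Fin R → ℝ) (v : Fin S → ℂ) (s : Fin S → ℝ) (M : ℕ) : ℝ :=
  ⨆ j : Fin R, ‖u j - ∑ k ∈ nearIdx r s M j, v k‖

/-- Support error `𝓔_2^M(ρ,ν)`. -/
def E2 {R S : ℕ} (u : Fin R → ℂ) (r : Fin R → ℝ) (v : Fin S → ℂ) (s : Fin S → ℝ) (M : ℕ) : ℝ :=
  ∑ j : Fin R, ∑ k ∈ nearIdx r s M j, ‖v k‖ * distT (r j - s k) ^ 2

/-- Spurious-atom error `𝓔_3^M(ρ,ν)`. -/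
def E3 {R S : ℕ} (u : Fin R → ℂ) (r : Fin R → ℝ) (v : Fin S → ℂ) (s : Fin S → ℝ) (M : ℕ) : ℝ :=
  ∑ k ∈ farIdx r s M, ‖v k‖

/-- Mixed `ℓ∞ + ℓ²` error `𝓔^π_{∞,2}(ρ,ν)` for a permutation `π`. -/
def EInf2 {S : ℕ} (u : Fin S → ℂ) (r : Fin S → ℝ) (v : Fin S → ℂ) (s : Fin S → ℝ)
    (σ : Equiv.Perm (Fin S)) : ℝ :=
  (⨆ j, distT (r j - s (σ j))) +
    Real.sqrt (∑ j, ‖u j - v (σ j)‖ ^ 2) / Real.sqrt (∑ j, ‖u j‖ ^ 2)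

end

section Helpers

lemma distT_nonneg (t : ℝ) : 0 ≤ distT t := le_ciInf fun _ => abs_nonneg _

lemma distT_bdd (t : ℝ) : BddBelow (Set.range fun n : ℤ => |t - (n : ℝ)|) :=
  ⟨0, by rintro x ⟨n, rfl⟩; exact abs_nonneg _⟩

lemma distT_neg_le (t : ℝ) : distT (-t) ≤ distT t := by
  refine le_ciInf fun n => ?_
  have h : distT (-t) ≤ |(-t) - ((-n : ℤ) : ℝ)| := ciInf_le (distT_bdd (-t)) (-n)
  have e : (-t) - ((-n : ℤ) : ℝ) = -(t - (n : ℝ)) := by push_cast; ring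
  rwa [e, abs_neg] at h

lemma distT_neg (t : ℝ) : distT (-t) = distT t :=
  le_antisymm (distT_neg_le t) (by simpa using distT_neg_le (-t))

lemma lipSemi_nonneg (ψ : ℝ → ℂ) (h : ∃ L : ℝ, 0 ≤ L ∧ LipBnd ψ L) : 0 ≤ lipSemi ψ :=
  le_csInf h fun L hL => hL.1

lemma lipSemi_lipBnd (ψ : ℝ → ℂ) (h : ∃ L : ℝ, 0 ≤ L ∧ LipBnd ψ L) :
    LipBnd ψ (lipSemi ψ) := by
  intro a b
  rcases eq_or_lt_of_le (distT_nonneg (a - b)) with h0 | hpos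
  · obtain ⟨L, hL0, hL⟩ := h
    have := hL a b
    rw [← h0] at this ⊢
    simpa using this
  · rw [← div_le_iff₀ hpos]
    refine le_csInf h fun L hL => ?_
    rw [div_le_iff₀ hpos]
    exact hL.2 a b

lemma sqrt_sum_sq_le {S : ℕ} {a b : ℝ} (ha : 0 ≤ a) (hb : 0 ≤ b)
    (x y z : Fin S → ℝ)
    (h : ∀ j, |x j| ≤ a * y j + b * z j) :
    Real.sqrt (∑ j, x j ^ 2) ≤ a * Real.sqrt (∑ j, y j ^ 2) + b * Real.sqrt (∑ j, z j ^ 2) := by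
  have h1 : ∑ j, x j ^ 2 ≤ ∑ j, (a * y j + b * z j) ^ 2 :=
    Finset.sum_le_sum fun j _ => by
      have h2 := h j
      nlinarith [abs_nonneg (x j), _root_.sq_abs (x j)]
  set Y : EuclideanSpace ℝ (Fin S) := WithLp.toLp 2 y with hY
  set Z : EuclideanSpace ℝ (Fin S) := WithLp.toLp 2 z with hZ
  have hYn : ‖Y‖ = Real.sqrt (∑ j, y j ^ 2) := by
    rw [EuclideanSpace.norm_eq]
    congr 1
    exact Finset.sum_congr rfl fun j _ => by simp [hY, Real.norm_eq_abs, _root_.sq_abs]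
  have hZn : ‖Z‖ = Real.sqrt (∑ j, z j ^ 2) := by
    rw [EuclideanSpace.norm_eq]
    congr 1
    exact Finset.sum_congr rfl fun j _ => by simp [hZ, Real.norm_eq_abs, _root_.sq_abs]
  have h3 : Real.sqrt (∑ j, (a * y j + b * z j) ^ 2) = ‖a • Y + b • Z‖ := by
    rw [EuclideanSpace.norm_eq]
    congr 1
    refine Finset.sum_congr rfl fun j _ => ?_
    simp [hY, hZ, Real.norm_eq_abs, _root_.sq_abs, PiLp.add_apply, PiLp.smul_apply, smul_eq_mul]
  calc Real.sqrt (∑ j, x j ^ 2) ≤ Real.sqrt (∑ j, (a * y j + b * z j) ^ 2) :=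
        Real.sqrt_le_sqrt h1
    _ = ‖a • Y + b • Z‖ := h3
    _ ≤ ‖a • Y‖ + ‖b • Z‖ := norm_add_le _ _
    _ = a * ‖Y‖ + b * ‖Z‖ := by
        rw [norm_smul, norm_smul, Real.norm_eq_abs, Real.norm_eq_abs,
          _root_.abs_of_nonneg ha, _root_.abs_of_nonneg hb]
    _ = _ := by rw [hYn, hZn]

lemma final_arith {C L D q p : ℝ} (hC : 1 ≤ C) (hL : 0 ≤ L) (hD : 0 ≤ D)
    (hq : 0 ≤ q) (h : p ≤ C ^ 2 * q + C * L * D) :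
    D + p ≤ (1 + C * L + C ^ 2) * (D + q) := by
  have hC0 : (0:ℝ) ≤ C := le_trans zero_le_one hC
  nlinarith [mul_nonneg (mul_nonneg hC0 hL) hq, mul_nonneg (mul_nonneg hC0 hC0) hD, hq]

end Helpers

/-- Lemma 4.2: for `C⁻¹ ≤ |ψ| ≤ C` Lipschitz and any permutation `σ`,
`𝓔^σ_{∞,2}(ρ,ν) ≤ (1 + C|ψ|_Lip + C²) 𝓔^σ_{∞,2}(ψρ,ψν)` and conversely. -/
theorem statement11 (C : ℝ) (hC : 1 ≤ C) (ψ : ℝ → ℂ)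
    (hψLip : ∃ L : ℝ, 0 ≤ L ∧ LipBnd ψ L)
    (hψ : ∀ t : ℝ, C⁻¹ ≤ ‖ψ t‖ ∧ ‖ψ t‖ ≤ C)
    (S : ℕ) (hS : 1 ≤ S)
    (u : Fin S → ℂ) (r : Fin S → ℝ) (hr : ∀ j, r j ∈ Set.Ico (0 : ℝ) 1)
    (hrinj : Function.Injective r) (hu : u ≠ 0)
    (v : Fin S → ℂ) (s : Fin S → ℝ) (hs : ∀ k, s k ∈ Set.Ico (0 : ℝ) 1)
    (hsinj : Function.Injective s)
    (σ : Equiv.Perm (Fin S)) :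
    EInf2 u r v s σ ≤
        (1 + C * lipSemi ψ + C ^ 2) *
          EInf2 (fun j => u j * ψ (r j)) r (fun j => v j * ψ (s j)) s σ ∧
    EInf2 (fun j => u j * ψ (r j)) r (fun j => v j * ψ (s j)) s σ ≤
        (1 + C * lipSemi ψ + C ^ 2) * EInf2 u r v s σ := by
  classical
  haveI : Nonempty (Fin S) := ⟨⟨0, hS⟩⟩
  have hC0 : (0:ℝ) < C := lt_of_lt_of_le zero_lt_one hC
  have hL0 : 0 ≤ lipSemi ψ := lipSemi_nonneg ψ hψLip
  have hLip : LipBnd ψ (lipSemi ψ) := lipSemi_lipBnd ψ hψLip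
  set L := lipSemi ψ with hLdef
  have hdD : ∀ j, distT (r j - s (σ j)) ≤ ⨆ j, distT (r j - s (σ j)) := fun j =>
    le_ciSup (f := fun j => distT (r j - s (σ j))) (Set.Finite.bddAbove (Set.finite_range _)) j
  set D : ℝ := ⨆ j, distT (r j - s (σ j)) with hDdef
  have hD0 : 0 ≤ D := le_trans (distT_nonneg _) (hdD ⟨0, hS⟩)
  have hψpos : ∀ t, (0:ℝ) < ‖ψ t‖ := fun t => lt_of_lt_of_le (inv_pos.mpr hC0) (hψ t).1
  have hψinv : ∀ t, ‖ψ t‖⁻¹ ≤ C := by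
    intro t
    rw [← inv_inv C]
    exact inv_anti₀ (inv_pos.mpr hC0) (hψ t).1
  -- pointwise bounds
  have key1 : ∀ j, ‖u j - v (σ j)‖ ≤
      C * ‖u j * ψ (r j) - v (σ j) * ψ (s (σ j))‖ + C * (L * D) * ‖u j‖ := by
    intro j
    have hβ0 : ψ (s (σ j)) ≠ 0 := by
      intro h
      have := hψpos (s (σ j))
      rw [h] at this
      simp at this
    have hdecomp : u j - v (σ j)
        = (u j * ψ (r j) - v (σ j) * ψ (s (σ j))) / ψ (s (σ j))
          + u j * (ψ (s (σ j)) - ψ (r j)) / ψ (s (σ j)) := by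
      field_simp
      ring
    have hLd : ‖ψ (s (σ j)) - ψ (r j)‖ ≤ L * D := by
      have h1 := hLip (s (σ j)) (r j)
      have h2 : distT (s (σ j) - r j) = distT (r j - s (σ j)) := by
        rw [← distT_neg (r j - s (σ j)), neg_sub]
      rw [h2] at h1
      exact h1.trans (mul_le_mul_of_nonneg_left (hdD j) hL0)
    have tri : ‖u j - v (σ j)‖ ≤
        ‖u j * ψ (r j) - v (σ j) * ψ (s (σ j))‖ * ‖ψ (s (σ j))‖⁻¹
          + ‖u j‖ * ‖ψ (s (σ j)) - ψ (r j)‖ * ‖ψ (s (σ j))‖⁻¹ := by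
      rw [hdecomp]
      refine (norm_add_le _ _).trans (le_of_eq ?_)
      simp [norm_div, norm_mul, div_eq_mul_inv]
    have t1 : ‖u j * ψ (r j) - v (σ j) * ψ (s (σ j))‖ * ‖ψ (s (σ j))‖⁻¹
        ≤ ‖u j * ψ (r j) - v (σ j) * ψ (s (σ j))‖ * C :=
      mul_le_mul_of_nonneg_left (hψinv _) (norm_nonneg _)
    have t2 : ‖u j‖ * ‖ψ (s (σ j)) - ψ (r j)‖ * ‖ψ (s (σ j))‖⁻¹
        ≤ ‖u j‖ * (L * D) * C := by
      have a1 : ‖u j‖ * ‖ψ (s (σ j)) - ψ (r j)‖ ≤ ‖u j‖ * (L * D) :=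
        mul_le_mul_of_nonneg_left hLd (norm_nonneg _)
      exact mul_le_mul a1 (hψinv _) (inv_nonneg.mpr (norm_nonneg _))
        (by positivity)
    nlinarith [tri, t1, t2]
  have key2 : ∀ j, ‖u j * ψ (r j) - v (σ j) * ψ (s (σ j))‖ ≤
      C * ‖u j - v (σ j)‖ + (L * D) * ‖u j‖ := by
    intro j
    have hdecomp : u j * ψ (r j) - v (σ j) * ψ (s (σ j))
        = (u j - v (σ j)) * ψ (s (σ j)) + u j * (ψ (r j) - ψ (s (σ j))) := by ring
    have hLd : ‖ψ (r j) - ψ (s (σ j))‖ ≤ L * D :=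
      (hLip (r j) (s (σ j))).trans (mul_le_mul_of_nonneg_left (hdD j) hL0)
    have tri : ‖u j * ψ (r j) - v (σ j) * ψ (s (σ j))‖ ≤
        ‖u j - v (σ j)‖ * ‖ψ (s (σ j))‖ + ‖u j‖ * ‖ψ (r j) - ψ (s (σ j))‖ := by
      rw [hdecomp]
      refine (norm_add_le _ _).trans (le_of_eq ?_)
      rw [norm_mul, norm_mul]
    have t1 : ‖u j - v (σ j)‖ * ‖ψ (s (σ j))‖ ≤ ‖u j - v (σ j)‖ * C :=
      mul_le_mul_of_nonneg_left (hψ _).2 (norm_nonneg _)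
    have t2 : ‖u j‖ * ‖ψ (r j) - ψ (s (σ j))‖ ≤ ‖u j‖ * (L * D) :=
      mul_le_mul_of_nonneg_left hLd (norm_nonneg _)
    nlinarith [tri, t1, t2]
  -- sum-level bounds
  have hXW : Real.sqrt (∑ j, ‖u j - v (σ j)‖ ^ 2) ≤
      C * Real.sqrt (∑ j, ‖u j * ψ (r j) - v (σ j) * ψ (s (σ j))‖ ^ 2)
        + (C * (L * D)) * Real.sqrt (∑ j, ‖u j‖ ^ 2) :=
    sqrt_sum_sq_le hC0.le (by positivity) _ _ _
      (fun j => by rw [_root_.abs_of_nonneg (norm_nonneg _)]; exact key1 j)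
  have hWX : Real.sqrt (∑ j, ‖u j * ψ (r j) - v (σ j) * ψ (s (σ j))‖ ^ 2) ≤
      C * Real.sqrt (∑ j, ‖u j - v (σ j)‖ ^ 2)
        + (L * D) * Real.sqrt (∑ j, ‖u j‖ ^ 2) :=
    sqrt_sum_sq_le hC0.le (by positivity) _ _ _
      (fun j => by rw [_root_.abs_of_nonneg (norm_nonneg _)]; exact key2 j)
  have hNN' : Real.sqrt (∑ j, ‖u j‖ ^ 2) ≤
      C * Real.sqrt (∑ j, ‖u j * ψ (r j)‖ ^ 2) := by
    have h := sqrt_sum_sq_le (S := S) (a := C) (b := 0) hC0.le le_rfl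
      (fun j => ‖u j‖) (fun j => ‖u j * ψ (r j)‖) (fun _ => 0)
      (fun j => by
        show |‖u j‖| ≤ C * ‖u j * ψ (r j)‖ + 0 * 0
        rw [_root_.abs_of_nonneg (norm_nonneg _), norm_mul, mul_zero, add_zero]
        have h1 : C⁻¹ * ‖u j‖ ≤ ‖ψ (r j)‖ * ‖u j‖ :=
          mul_le_mul_of_nonneg_right (hψ (r j)).1 (norm_nonneg _)
        have h2 := mul_le_mul_of_nonneg_left h1 hC0.le
        rw [← mul_assoc, mul_inv_cancel₀ hC0.ne', one_mul] at h2
        nlinarith [h2])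
    simpa using h
  have hN'N : Real.sqrt (∑ j, ‖u j * ψ (r j)‖ ^ 2) ≤
      C * Real.sqrt (∑ j, ‖u j‖ ^ 2) := by
    have h := sqrt_sum_sq_le (S := S) (a := C) (b := 0) hC0.le le_rfl
      (fun j => ‖u j * ψ (r j)‖) (fun j => ‖u j‖) (fun _ => 0)
      (fun j => by
        show |‖u j * ψ (r j)‖| ≤ C * ‖u j‖ + 0 * 0
        rw [_root_.abs_of_nonneg (norm_nonneg _), norm_mul, mul_zero, add_zero]
        have h1 : ‖u j‖ * ‖ψ (r j)‖ ≤ ‖u j‖ * C :=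
          mul_le_mul_of_nonneg_left (hψ (r j)).2 (norm_nonneg _)
        nlinarith [h1])
    simpa using h
  set X := Real.sqrt (∑ j, ‖u j - v (σ j)‖ ^ 2) with hXdef
  set N := Real.sqrt (∑ j, ‖u j‖ ^ 2) with hNdef
  set W := Real.sqrt (∑ j, ‖u j * ψ (r j) - v (σ j) * ψ (s (σ j))‖ ^ 2) with hWdef
  set N' := Real.sqrt (∑ j, ‖u j * ψ (r j)‖ ^ 2) with hN'def
  have hX0 : 0 ≤ X := Real.sqrt_nonneg _
  have hW0 : 0 ≤ W := Real.sqrt_nonneg _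
  have hNpos : 0 < N := by
    rw [hNdef, Real.sqrt_pos]
    obtain ⟨j, hj⟩ := Function.ne_iff.mp hu
    exact lt_of_lt_of_le (pow_pos (norm_pos_iff.mpr hj) 2)
      (Finset.single_le_sum (f := fun i => ‖u i‖ ^ 2) (fun i _ => by positivity)
        (Finset.mem_univ j))
  have hN'pos : 0 < N' := by nlinarith [hNN', hNpos, Real.sqrt_nonneg (∑ j, ‖u j * ψ (r j)‖ ^ 2)]
  have goal1 : D + X / N ≤ (1 + C * L + C ^ 2) * (D + W / N') := by
    have hstep : C * W ≤ C ^ 2 * (W / N') * N := by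
      rw [show C ^ 2 * (W / N') * N = (C ^ 2 * W * N) / N' from by ring,
        le_div_iff₀ hN'pos]
      nlinarith [mul_le_mul_of_nonneg_left hN'N (mul_nonneg hC0.le hW0)]
    have hp : X / N ≤ C ^ 2 * (W / N') + C * L * D := by
      rw [div_le_iff₀ hNpos]
      calc X ≤ C * W + (C * (L * D)) * N := hXW
        _ ≤ C ^ 2 * (W / N') * N + (C * (L * D)) * N := by linarith
        _ = (C ^ 2 * (W / N') + C * L * D) * N := by ring
    exact final_arith hC hL0 hD0 (div_nonneg hW0 hN'pos.le) hp
  have goal2 : D + W / N' ≤ (1 + C * L + C ^ 2) * (D + X / N) := by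
    have hstep : C * X ≤ C ^ 2 * (X / N) * N' := by
      rw [show C ^ 2 * (X / N) * N' = (C ^ 2 * X * N') / N from by ring,
        le_div_iff₀ hNpos]
      nlinarith [mul_le_mul_of_nonneg_left hNN' (mul_nonneg hC0.le hX0)]
    have hstep2 : (L * D) * N ≤ (C * L * D) * N' := by
      nlinarith [mul_le_mul_of_nonneg_left hNN' (mul_nonneg hL0 hD0)]
    have hp : W / N' ≤ C ^ 2 * (X / N) + C * L * D := by
      rw [div_le_iff₀ hN'pos]
      calc W ≤ C * X + (L * D) * N := hWX
        _ ≤ C ^ 2 * (X / N) * N' + (C * L * D) * N' := by linarith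
        _ = (C ^ 2 * (X / N) + C * L * D) * N' := by ring
    exact final_arith hC hL0 hD0 (div_nonneg hX0 hNpos.le) hp
  constructor
  · simpa only [EInf2] using goal1
  · simpa only [EInf2] using goal2
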